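/- Let n ≥ 1 and k ≥ 0 be integers, let h : ℝⁿ → ℂ be a harmonic polynomial homogeneous of degree k, and set c_{k,n} := 1/(2k+n−2) if (k,n) ≠ (0,2) and c_{0,2} := 0. Then for every j ∈ {1,…,n}, the function y ↦ y_j h(y) − c_{k,n} ‖y‖² (∂h/∂y_j)(y) is a harmonic polynomial homogeneous of degree k+1. -/

import Mathlib

noncomputable section

/-- `n`-dimensional Euclidean space. -/
abbrev E (n : ℕ) := EuclideanSpace ℝ (Fin n)

/-- Partial derivative in the `j`-th coordinate direction. -/
noncomputable def pd {n : ℕ} (j : Fin n) (f : E n → ℂ) (y : E n) : ℂ :=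
  fderiv ℝ f y (EuclideanSpace.single j 1)

/-- The Laplacian `Δ = ∑ⱼ ∂²/∂yⱼ²`. -/
noncomputable def lap {n : ℕ} (f : E n → ℂ) (y : E n) : ℂ :=
  ∑ j : Fin n, pd j (pd j f) y

/-- `h : ℝⁿ → ℂ` is a harmonic polynomial, homogeneous of degree `k`:
it is given by a polynomial in the coordinates, `h (t • y) = t^k * h y`,
and `Δ h = 0`. -/
def IsHarmonicHomog {n : ℕ} (k : ℕ) (h : E n → ℂ) : Prop :=
  (∃ p : MvPolynomial (Fin n) ℂ, ∀ y : E n, h y = MvPolynomial.eval (fun j => ((y j : ℝ) : ℂ)) p) ∧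
  (∀ (t : ℝ) (y : E n), h (t • y) = (t : ℂ) ^ k * h y) ∧
  (∀ y : E n, lap h y = 0)

/-- The constant `c_{k,n}`: `1/(2k+n-2)` unless `(k,n) = (0,2)`, where it is `0`. -/
noncomputable def ckn (k n : ℕ) : ℂ :=
  if k = 0 ∧ n = 2 then 0 else 1 / (2 * (k : ℂ) + (n : ℂ) - 2)

open MvPolynomial

/-- evaluation of a polynomial on real points -/
noncomputable def Pf {n : ℕ} (p : MvPolynomial (Fin n) ℂ) (y : E n) : ℂ :=
  MvPolynomial.eval (fun i => ((y i : ℝ) : ℂ)) p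

noncomputable def coordC {n : ℕ} (i : Fin n) : E n →L[ℝ] ℂ :=
  Complex.ofRealCLM.comp (EuclideanSpace.proj i)

lemma coordC_apply {n : ℕ} (i : Fin n) (y : E n) : coordC i y = ((y i : ℝ) : ℂ) := rfl

lemma pd_coordC {n : ℕ} (i j : Fin n) (y : E n) :
    pd j (fun y => ((y i : ℝ) : ℂ)) y = if i = j then 1 else 0 := by
  have : (fun y : E n => ((y i : ℝ) : ℂ)) = ⇑(coordC i) := rfl
  rw [pd, this, (coordC i).fderiv]
  simp [coordC_apply, EuclideanSpace.single_apply]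
  split_ifs with h1 h2 h2 <;> simp_all [eq_comm]

lemma Pf_main {n : ℕ} (p : MvPolynomial (Fin n) ℂ) :
    Differentiable ℝ (Pf p) ∧ ∀ (j : Fin n) (y : E n), pd j (Pf p) y = Pf (pderiv j p) y := by
  induction p using MvPolynomial.induction_on with
  | C a =>
    have h1 : Pf (C a : MvPolynomial (Fin n) ℂ) = fun _ => a := by funext y; simp [Pf]
    constructor
    · rw [h1]; exact differentiable_const _
    · intro j y
      rw [h1]
      simp [Pf, pd]
  | add p q hp hq =>
    constructor
    · have : Pf (p + q) = fun y => Pf p y + Pf q y := by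
        funext y; simp [Pf]
      rw [this]; exact hp.1.add hq.1
    · intro j y
      have h1 : Pf (p + q) = fun y => Pf p y + Pf q y := by funext y; simp [Pf]
      have hp2 := hp.2 j y; have hq2 := hq.2 j y
      simp only [pd] at hp2 hq2 ⊢
      rw [h1, fderiv_fun_add (hp.1 y) (hq.1 y)]
      simp [hp2, hq2, Pf]
  | mul_X p i hp =>
    have hco : Differentiable ℝ (fun y : E n => ((y i : ℝ) : ℂ)) := (coordC i).differentiable
    have h1 : Pf (p * X i) = fun y => Pf p y * ((y i : ℝ) : ℂ) := by funext y; simp [Pf]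
    constructor
    · rw [h1]; exact hp.1.mul hco
    · intro j y
      have hp2 := hp.2 j y
      have hc2 := pd_coordC i j y
      simp only [pd] at hp2 hc2 ⊢
      rw [h1, fderiv_fun_mul (hp.1 y) (hco y)]
      simp only [ContinuousLinearMap.add_apply, ContinuousLinearMap.smul_apply, smul_eq_mul]
      rw [hp2, hc2]
      simp [Pf, pderiv_mul, pderiv_X, Pi.single_apply]
      split_ifs with hij <;> simp [hij] <;> ring

lemma pderiv_comm' {n : ℕ} (p : MvPolynomial (Fin n) ℂ) (i j : Fin n) :
    pderiv i (pderiv j p) = pderiv j (pderiv i p) := by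
  induction p using MvPolynomial.induction_on with
  | C a => simp
  | add p q hp hq => simp [hp, hq]
  | mul_X p l hp =>
    classical
    simp only [pderiv_mul, pderiv_X, map_add, Pi.single_apply]
    split_ifs <;> simp [pderiv_mul, hp] <;> ring

lemma norm_sq_eq {n : ℕ} (y : E n) :
    ((‖y‖ : ℝ) : ℂ) ^ 2 = ∑ i, ((y i : ℝ) : ℂ) * ((y i : ℝ) : ℂ) := by
  have h1 : (‖y‖ : ℝ) ^ 2 = ∑ i, (y i) * (y i) := by
    rw [EuclideanSpace.norm_eq, Real.sq_sqrt (by positivity)]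
    simp [sq]
  have : ((‖y‖ : ℝ) : ℂ) ^ 2 = (((‖y‖ ^ 2 : ℝ)) : ℂ) := by push_cast; ring
  rw [this, h1]
  push_cast
  rfl

lemma sum_single_eq {n : ℕ} (y : E n) :
    ∑ i, (y i) • EuclideanSpace.single i (1 : ℝ) = y := by
  ext l
  have : (∑ i, (y i) • EuclideanSpace.single i (1 : ℝ)) l
      = ∑ i, ((y i) • EuclideanSpace.single i (1 : ℝ)) l := by
    rw [WithLp.ofLp_sum]; exact Finset.sum_apply l Finset.univ _
  rw [this]
  simp [EuclideanSpace.single_apply]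

lemma chainA {n k : ℕ} (p : MvPolynomial (Fin n) ℂ)
    (hhom : ∀ (t : ℝ) (y : E n), Pf p (t • y) = (t : ℂ) ^ k * Pf p y) (j : Fin n)
    (t : ℝ) (y : E n) :
    (t : ℂ) * pd j (Pf p) (t • y) = (t : ℂ) ^ k * pd j (Pf p) y := by
  have hdiff := (Pf_main p).1
  have h1 : (fun z : E n => Pf p (t • z)) = fun z => (t : ℂ) ^ k * Pf p z := by
    funext z; exact hhom t z
  have hc : (fun z : E n => Pf p (t • z)) = (Pf p) ∘ ⇑(t • ContinuousLinearMap.id ℝ (E n)) := rfl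
  have hL : fderiv ℝ (fun z : E n => Pf p (t • z)) y
      = (fderiv ℝ (Pf p) (t • y)).comp (t • ContinuousLinearMap.id ℝ (E n)) := by
    rw [hc, fderiv_comp y (hdiff _) ((t • ContinuousLinearMap.id ℝ (E n)).differentiableAt),
      ContinuousLinearMap.fderiv]
    rfl
  have h2 : fderiv ℝ (fun z : E n => Pf p (t • z)) y (EuclideanSpace.single j 1)
      = (t : ℂ) * pd j (Pf p) (t • y) := by
    rw [hL]
    simp only [ContinuousLinearMap.coe_comp', Function.comp_apply,
      ContinuousLinearMap.smul_apply, ContinuousLinearMap.coe_id', id_eq, map_smul, pd]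
    rw [Complex.real_smul]
  have h3 : fderiv ℝ (fun z : E n => Pf p (t • z)) y (EuclideanSpace.single j 1)
      = (t : ℂ) ^ k * pd j (Pf p) y := by
    rw [h1, fderiv_const_mul (hdiff y)]
    simp [pd]
  rw [← h2, h3]

lemma euler {n k : ℕ} (p : MvPolynomial (Fin n) ℂ)
    (hhom : ∀ (t : ℝ) (y : E n), Pf p (t • y) = (t : ℂ) ^ k * Pf p y) (j : Fin n) (y : E n) :
    ∑ i, ((y i : ℝ) : ℂ) * Pf (pderiv i (pderiv j p)) y
      = ((k : ℂ) - 1) * Pf (pderiv j p) y := by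
  set g : E n → ℂ := Pf (pderiv j p) with hg
  have hgpd : ∀ z, g z = pd j (Pf p) z := fun z => ((Pf_main p).2 j z).symm
  have gdiff : Differentiable ℝ g := (Pf_main (pderiv j p)).1
  have hA : ∀ (t : ℝ) (z : E n), (t : ℂ) * g (t • z) = (t : ℂ) ^ k * g z := by
    intro t z; rw [hgpd, hgpd]; exact chainA p hhom j t z
  have d1 : HasDerivAt (fun t : ℝ => ((t : ℝ) : ℂ)) 1 1 := by
    simpa using (hasDerivAt_id (1:ℝ)).ofReal_comp
  have hcurve : HasDerivAt (fun t : ℝ => t • y) y 1 := by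
    simpa using (hasDerivAt_id (1 : ℝ)).smul_const y
  have d2 : HasDerivAt (fun t : ℝ => g (t • y)) (fderiv ℝ g y y) 1 := by
    have := (gdiff ((1:ℝ) • y)).hasFDerivAt.comp_hasDerivAt 1 hcurve
    simp only [one_smul] at this
    exact this
  have dψ : HasDerivAt (fun t : ℝ => (t : ℂ) * g (t • y))
      (1 * g ((1:ℝ) • y) + ((1:ℝ) : ℂ) * fderiv ℝ g y y) 1 := d1.mul d2
  have hψ : (fun t : ℝ => (t : ℂ) * g (t • y)) = fun t : ℝ => (t : ℂ) ^ k * g y :=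
    funext fun t => hA t y
  have dpow : HasDerivAt (fun t : ℝ => (t : ℂ) ^ k) ((k : ℂ)) 1 := by
    have h0 : HasDerivAt (fun t : ℝ => t ^ k) ((k : ℝ) * 1 ^ (k - 1)) 1 := hasDerivAt_pow k 1
    have h1 := h0.ofReal_comp
    have h2 : (fun t : ℝ => ((t ^ k : ℝ) : ℂ)) = fun t : ℝ => (t : ℂ) ^ k := by
      funext t; push_cast; rfl
    rw [h2] at h1; simpa using h1
  have dψ' : HasDerivAt (fun t : ℝ => (t : ℂ) ^ k * g y) ((k : ℂ) * g y) 1 :=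
    dpow.mul_const (g y)
  rw [hψ] at dψ
  have huniq := dψ.unique dψ'
  simp only [one_smul, Complex.ofReal_one, one_mul, one_pow, mul_one] at huniq
  have hfd : fderiv ℝ g y y = ∑ i, ((y i : ℝ) : ℂ) * Pf (pderiv i (pderiv j p)) y := by
    calc fderiv ℝ g y y = fderiv ℝ g y (∑ i, (y i) • EuclideanSpace.single i 1) := by
          rw [sum_single_eq y]
      _ = ∑ i, ((y i : ℝ) : ℂ) * Pf (pderiv i (pderiv j p)) y := by
          rw [map_sum]
          refine Finset.sum_congr rfl fun i _ => ?_
          rw [map_smul, Complex.real_smul]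
          congr 1
          exact (Pf_main (pderiv j p)).2 i y
  rw [hfd] at huniq
  have : ∑ i, ((y i : ℝ) : ℂ) * Pf (pderiv i (pderiv j p)) y = (k : ℂ) * g y - g y := by
    rw [← huniq]; ring
  rw [this]; ring

/-- For `h` a harmonic polynomial homogeneous of degree `k` on `ℝⁿ` (`n ≥ 1`), the
function `y ↦ yⱼ h(y) - c_{k,n} ‖y‖² ∂ⱼh(y)` is a harmonic polynomial homogeneous of
degree `k+1`. -/
theorem stmt5 (n k : ℕ) (hn : 1 ≤ n) (h : E n → ℂ) (hh : IsHarmonicHomog k h)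
    (j : Fin n) :
    IsHarmonicHomog (k + 1)
      (fun y : E n => ((y j : ℝ) : ℂ) * h y - ckn k n * ((‖y‖ : ℝ) : ℂ) ^ 2 * pd j h y) := by
  classical
  obtain ⟨⟨p, hp⟩, hhom, hlap⟩ := hh
  have hfe : h = Pf p := funext hp
  subst hfe
  set c : ℂ := ckn k n with hc
  set D : MvPolynomial (Fin n) ℂ := pderiv j p with hD
  set S : MvPolynomial (Fin n) ℂ := ∑ l, X l * X l with hS
  set q : MvPolynomial (Fin n) ℂ := X j * p - C c * (S * D) with hq
  have hSeval : ∀ y : E n, Pf S y = ((‖y‖ : ℝ) : ℂ) ^ 2 := by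
    intro y
    rw [norm_sq_eq y]
    simp [Pf, hS]
  have hFq : (fun y : E n =>
      ((y j : ℝ) : ℂ) * Pf p y - c * ((‖y‖ : ℝ) : ℂ) ^ 2 * pd j (Pf p) y) = Pf q := by
    funext y
    rw [(Pf_main p).2 j y, ← hSeval y]
    simp only [hq, Pf, map_sub, eval_mul, eval_X, eval_C]
    ring
  rw [hFq]
  have hpd2 : ∀ (r : MvPolynomial (Fin n) ℂ) (i : Fin n) (z : E n),
      pd i (pd i (Pf r)) z = Pf (pderiv i (pderiv i r)) z := by
    intro r i z
    have h1 : pd i (Pf r) = Pf (pderiv i r) := funext fun w => (Pf_main r).2 i w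
    rw [h1]
    exact (Pf_main _).2 i z
  have hSd : ∀ i : Fin n, pderiv i S = X i + X i := by
    intro i
    rw [hS, map_sum]
    rw [show (∑ l, pderiv i (X l * X l : MvPolynomial (Fin n) ℂ))
        = ∑ l, ((if l = i then 1 else 0) * X l + X l * (if l = i then 1 else 0)) from
      Finset.sum_congr rfl fun l _ => by simp [pderiv_mul, pderiv_X, Pi.single_apply]]
    simp [ite_mul, mul_ite, Finset.sum_add_distrib]
  have key : ∀ i : Fin n, pderiv i (pderiv i q) =
      (if j = i then D + D else 0) + X j * pderiv i (pderiv i p)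
        - C c * ((D + D) + ((X i + X i) * pderiv i D
            + ((X i + X i) * pderiv i D + S * pderiv i (pderiv i D)))) := by
    intro i
    rcases eq_or_ne j i with rfl | hij
    · simp only [hq, hD, map_sub, map_add, map_zero, pderiv_mul, pderiv_C_mul, hSd,
        pderiv_X_self, pderiv_C, pderiv_one, eq_self_iff_true, if_true, if_pos rfl]
      ring
    · simp only [hq, hD, map_sub, map_add, pderiv_mul, pderiv_C_mul, hSd,
        map_zero, pderiv_X_of_ne hij, pderiv_X_self, pderiv_C, pderiv_one, if_neg hij]
      ring
  refine ⟨⟨q, fun y => rfl⟩, ?_, ?_⟩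
  · -- homogeneity
    intro t y
    have hFy : ∀ z : E n, Pf q z =
        ((z j : ℝ) : ℂ) * Pf p z - c * ((‖z‖ : ℝ) : ℂ) ^ 2 * pd j (Pf p) z :=
      fun z => (congrFun hFq z).symm
    rw [hFy (t • y), hFy y]
    have hA := chainA p hhom j t y
    have hty : ((t • y : E n) j : ℝ) = t * y j := rfl
    have hnty : ((‖t • y‖ : ℝ) : ℂ) ^ 2 = (t : ℂ) ^ 2 * ((‖y‖ : ℝ) : ℂ) ^ 2 := by
      have h2 : (‖t • y‖ : ℝ) ^ 2 = t ^ 2 * ‖y‖ ^ 2 := by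
        rw [norm_smul]; simp [mul_pow, sq_abs]
      calc ((‖t • y‖ : ℝ) : ℂ) ^ 2 = ((‖t • y‖ ^ 2 : ℝ) : ℂ) := by push_cast; ring
        _ = (t : ℂ) ^ 2 * ((‖y‖ : ℝ) : ℂ) ^ 2 := by rw [h2]; push_cast; ring
    rw [hty, hnty, hhom t y]
    push_cast
    linear_combination (-(c) * ((‖y‖ : ℝ) : ℂ) ^ 2 * (t : ℂ)) * hA
  · -- harmonicity
    intro y
    have e1 : lap (Pf q) y = ∑ i, Pf (pderiv i (pderiv i q)) y :=
      Finset.sum_congr rfl fun i _ => hpd2 q i y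
    have hsum0 : ∀ z : E n, ∑ i, Pf (pderiv i (pderiv i p)) z = 0 := by
      intro z
      rw [show (∑ i, Pf (pderiv i (pderiv i p)) z) = lap (Pf p) z from
        (Finset.sum_congr rfl fun i _ => (hpd2 p i z).symm)]
      exact hlap z
    have hsumD : ∑ i, Pf (pderiv i (pderiv i D)) y = 0 := by
      have hLz : Pf (∑ i, pderiv i (pderiv i p)) = fun _ : E n => (0 : ℂ) := by
        funext z
        rw [show Pf (∑ i, pderiv i (pderiv i p)) z = ∑ i, Pf (pderiv i (pderiv i p)) z from by
          simp [Pf]]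
        exact hsum0 z
      have hcomm : (∑ i, pderiv i (pderiv i D)) = pderiv j (∑ i, pderiv i (pderiv i p)) := by
        rw [map_sum]
        refine Finset.sum_congr rfl fun i _ => ?_
        rw [hD, pderiv_comm' p i j, pderiv_comm' (pderiv i p) i j]
      have h3 : ∑ i, Pf (pderiv i (pderiv i D)) y
          = Pf (pderiv j (∑ i, pderiv i (pderiv i p))) y := by
        rw [← hcomm]; simp [Pf]
      rw [h3, ← (Pf_main _).2 j y, hLz]
      simp [pd]
    have heuler : ∑ i, ((y i : ℝ) : ℂ) * Pf (pderiv i D) y = ((k : ℂ) - 1) * Pf D y :=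
      euler p hhom j y
    have e2 : ∀ i : Fin n, Pf (pderiv i (pderiv i q)) y =
        ((if j = i then 2 * Pf D y else 0) + ((y j : ℝ) : ℂ) * Pf (pderiv i (pderiv i p)) y)
          - (c * (2 * Pf D y) + (c * 4 * (((y i : ℝ) : ℂ) * Pf (pderiv i D) y)
              + c * Pf S y * Pf (pderiv i (pderiv i D)) y)) := by
      intro i
      rw [key i]
      simp only [Pf, map_sub, map_add, map_zero, eval_mul, eval_X, eval_C,
        apply_ite (eval fun l => ((y l : ℝ) : ℂ)), map_ofNat]
      split_ifs <;> ring
    rw [e1, Finset.sum_congr rfl fun i _ => e2 i]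
    simp only [Finset.sum_sub_distrib, Finset.sum_add_distrib, ← Finset.mul_sum,
      Finset.sum_ite_eq, Finset.mem_univ, if_true, Finset.sum_const, Finset.card_univ,
      Fintype.card_fin, nsmul_eq_mul]
    rw [hsum0 y, hsumD, heuler]
    by_cases hkn : k = 0 ∧ n = 2
    · have hc0 : c = 0 := by rw [hc, ckn, if_pos hkn]
      have hgy : Pf D y = 0 := by
        have hconst : Pf p = fun _ : E n => Pf p 0 := by
          funext z
          have h0 := hhom 0 z
          rw [hkn.1, pow_zero, zero_smul, one_mul] at h0
          exact h0.symm
        have : Pf D y = pd j (Pf p) y := ((Pf_main p).2 j y).symm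
        rw [this, hconst]
        simp [pd]
      rw [hc0, hgy]
      ring
    · have hcval : c = 1 / (2 * (k : ℂ) + (n : ℂ) - 2) := by rw [hc, ckn, if_neg hkn]
      have hne : (2 * (k : ℂ) + (n : ℂ) - 2) ≠ 0 := by
        intro h0
        have h1 : ((2 * k + n : ℕ) : ℂ) = ((2 : ℕ) : ℂ) := by push_cast; linear_combination h0
        have h2 : 2 * k + n = 2 := Nat.cast_injective h1
        exact hkn (by omega)
      rw [hcval]
      field_simp
      ring

end
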